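/- Let g, h ≥ 1, τ ∈ M_g(ℂ) with det(Im τ) ≠ 0 and σ ∈ M_h(ℂ) with det(Im σ) ≠ 0. Suppose M ∈ M_{h×g}(ℂ) and R ∈ M_{2h×2g}(ℤ) satisfy M·Π(τ) = Π(σ)·R, and suppose M is injective as a ℂ-linear map ℂ^g → ℂ^h (i.e. the corresponding homomorphism X_τ → X_σ has finite kernel). Then every entry of τ lies in F_σ; that is, F_τ ⊆ F_σ, and in particular [F_τ : ℚ] ≤ [F_σ : ℚ]. -/

import Mathlib

open Matrix Module IntermediateField
open scoped ComplexOrder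

set_option synthInstance.maxHeartbeats 1000000
set_option maxHeartbeats 1000000

noncomputable section

/-- The period matrix `Π(τ) = (τ | I_g)`, a `g × 2g` complex matrix. -/
def PeriodMatrix (g : ℕ) (τ : Matrix (Fin g) (Fin g) ℂ) :
    Matrix (Fin g) (Fin g ⊕ Fin g) ℂ :=
  Matrix.fromCols τ 1

/-- `F_τ`: the subfield of `ℂ` generated over `ℚ` by the entries of `τ`. -/
def EntryField (g : ℕ) (τ : Matrix (Fin g) (Fin g) ℂ) : IntermediateField ℚ ℂ :=
  IntermediateField.adjoin ℚ {x : ℂ | ∃ i j, τ i j = x}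

theorem entryField_le_of_finite_kernel
    (g h : ℕ) (hg : 1 ≤ g) (hh : 1 ≤ h)
    (τ : Matrix (Fin g) (Fin g) ℂ) (σ : Matrix (Fin h) (Fin h) ℂ)
    (hτ : (τ.map Complex.im).det ≠ 0) (hσ : (σ.map Complex.im).det ≠ 0)
    (M : Matrix (Fin h) (Fin g) ℂ) (R : Matrix (Fin h ⊕ Fin h) (Fin g ⊕ Fin g) ℤ)
    (hMR : M * PeriodMatrix g τ = PeriodMatrix h σ * R.map (Int.cast : ℤ → ℂ))
    (hinj : Function.Injective M.mulVecLin) :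
    EntryField g τ ≤ EntryField h σ := by
  set K : IntermediateField ℚ ℂ := EntryField h σ with hK
  have hσK : ∀ i j, σ i j ∈ K := fun i j =>
    IntermediateField.subset_adjoin ℚ _ ⟨i, j, rfl⟩
  -- Entrywise consequence of the period relation: every entry of `M * Π(τ)` lies in `K`.
  have memK : ∀ (i : Fin h) (c : Fin g ⊕ Fin g), (M * PeriodMatrix g τ) i c ∈ K := by
    intro i c
    have hentry : (M * PeriodMatrix g τ) i c
        = ∑ k : Fin h, σ i k * (R (Sum.inl k) c : ℂ) + (R (Sum.inr i) c : ℂ) := by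
      rw [hMR]
      simp only [Matrix.mul_apply, PeriodMatrix, Matrix.fromCols, Matrix.map_apply,
        Fintype.sum_sum_type, Matrix.of_apply, Sum.elim_inl, Sum.elim_inr,
        Matrix.one_apply, ite_mul, one_mul, zero_mul]
      congr 1
      rw [Finset.sum_ite_eq, if_pos (Finset.mem_univ i)]
    rw [hentry]
    exact add_mem
      (sum_mem fun k _ => mul_mem (hσK i k) (intCast_mem K _))
      (intCast_mem K _)
  -- The entries of `M` and of `M * τ` lie in `K`.
  have hMK : ∀ i j, M i j ∈ K := by
    intro i j
    have : (M * PeriodMatrix g τ) i (Sum.inr j) = M i j := by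
      simp [Matrix.mul_apply, PeriodMatrix, Matrix.fromCols, Matrix.one_apply, mul_ite]
    exact this ▸ memK i (Sum.inr j)
  have hMτK : ∀ i j, (M * τ) i j ∈ K := by
    intro i j
    have : (M * PeriodMatrix g τ) i (Sum.inl j) = (M * τ) i j := by
      simp [Matrix.mul_apply, PeriodMatrix, Matrix.fromCols]
    exact this ▸ memK i (Sum.inl j)
  -- Work over the field `K`.
  set c : K →+* ℂ := algebraMap K ℂ with hc
  set M' : Matrix (Fin h) (Fin g) K := Matrix.of fun i j => (⟨M i j, hMK i j⟩ : K) with hM'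
  set P : Matrix (Fin h) (Fin g) K := Matrix.of fun i j => (⟨(M * τ) i j, hMτK i j⟩ : K) with hP
  have hMmap : M'.map c = M := by
    ext i j
    simp [hM', Matrix.map_apply, hc, IsScalarTower.algebraMap_apply]
  have hPmap : P.map c = M * τ := by
    ext i j
    simp [hP, Matrix.map_apply, hc, IsScalarTower.algebraMap_apply]
  have cast_mulVec : ∀ v : Fin g → K,
      M.mulVec (fun k => (v k : ℂ)) = fun i => ((M'.mulVec v) i : ℂ) := by
    intro v
    funext i
    simp only [Matrix.mulVec, dotProduct, hM', Matrix.of_apply]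
    rw [AddSubmonoidClass.coe_finset_sum]
    exact Finset.sum_congr rfl fun k _ => rfl
  have hker : LinearMap.ker (Matrix.toLin' M') = ⊥ := by
    rw [LinearMap.ker_eq_bot]
    intro v w hvw
    have h2 : M.mulVecLin (fun k => (v k : ℂ)) = M.mulVecLin (fun k => (w k : ℂ)) := by
      simp only [Matrix.mulVecLin_apply, cast_mulVec]
      rw [show M'.mulVec v = M'.mulVec w from hvw]
    have h3 := hinj h2
    funext k
    exact Subtype.ext (congrFun h3 k)
  obtain ⟨G, hG⟩ := (Matrix.toLin' M').exists_leftInverse_of_injective hker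
  set N : Matrix (Fin g) (Fin h) K := LinearMap.toMatrix' G with hN
  have hNM' : N * M' = 1 := by
    have := congrArg LinearMap.toMatrix' hG
    rwa [LinearMap.toMatrix'_comp, LinearMap.toMatrix'_toLin', LinearMap.toMatrix'_id] at this
  have hfinal : τ = (N * P).map c := by
    calc τ = 1 * τ := (one_mul τ).symm
      _ = ((N * M').map c) * τ := by
          rw [hNM', Matrix.map_one c (map_zero c) (map_one c)]
      _ = ((N.map c) * (M'.map c)) * τ := by rw [Matrix.map_mul]
      _ = (N.map c) * (M * τ) := by rw [hMmap, Matrix.mul_assoc]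
      _ = (N.map c) * (P.map c) := by rw [hPmap]
      _ = (N * P).map c := (Matrix.map_mul).symm
  rw [show EntryField g τ = IntermediateField.adjoin ℚ {x : ℂ | ∃ i j, τ i j = x} from rfl,
    IntermediateField.adjoin_le_iff]
  rintro x ⟨i, j, rfl⟩
  have := congrFun (congrFun hfinal i) j
  rw [this]
  exact ((N * P) i j).2

end
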